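/- Let f, g be convex on [0,1]^d with |f|,|g| ≤ 1, let ρ = ℓ_H(V_f(1), V_g(1)) > 0, and for x in the open cube (0,1)^d let m_f(x), m_g(x) denote subgradients of f and g at x. Then for every x ∈ (0,1)^d, |f(x) - g(x)| ≤ ρ (1 + |m_f(x)| + |m_g(x)|), where |·| is the Euclidean norm. -/

import Mathlib

/-- Truncated epigraph of `f` (defined on the unit cube), as a subset of `ℝ^{d+1}`
with the Euclidean metric. -/
def truncEpigraph (d : ℕ) (f : (Fin d → ℝ) → ℝ) (B : ℝ) :
    Set (EuclideanSpace ℝ (Fin (d + 1))) :=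
  {z | (∀ i : Fin d, z i.castSucc ∈ Set.Icc (0:ℝ) 1) ∧
       f (fun i => z i.castSucc) ≤ z (Fin.last d) ∧ z (Fin.last d) ≤ B}

/-- Cauchy–Schwarz for finite sums (abs version). -/
lemma cs_abs {n : ℕ} (m w : Fin n → ℝ) :
    |∑ i, m i * w i| ≤ Real.sqrt (∑ i, m i ^ 2) * Real.sqrt (∑ i, w i ^ 2) := by
  have h := Finset.sum_mul_sq_le_sq_mul_sq Finset.univ m w
  have h1 : |∑ i, m i * w i| = Real.sqrt ((∑ i, m i * w i) ^ 2) :=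
    (Real.sqrt_sq_eq_abs _).symm
  rw [h1, ← Real.sqrt_mul (by positivity)]
  exact Real.sqrt_le_sqrt h

lemma trunc_nonempty (d : ℕ) (f : (Fin d → ℝ) → ℝ)
    (hf1 : ∀ x ∈ Set.Icc (0 : Fin d → ℝ) 1, |f x| ≤ 1) :
    (truncEpigraph d f 1).Nonempty := by
  refine ⟨WithLp.toLp 2 (fun j => Fin.lastCases (motive := fun _ => ℝ) 1 (fun _ => (0:ℝ)) j), ?_, ?_, ?_⟩
  · intro i
    simp [Fin.lastCases_castSucc]
  · have hx : (fun i : Fin d => Fin.lastCases (motive := fun _ => ℝ) 1 (fun _ => (0:ℝ)) i.castSucc)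
        = (0 : Fin d → ℝ) := by
      funext i; simp [Fin.lastCases_castSucc]
    simp only [PiLp.toLp_apply]
    rw [hx]
    have h0 : (0 : Fin d → ℝ) ∈ Set.Icc (0 : Fin d → ℝ) 1 := ⟨le_refl _, zero_le_one⟩
    have := hf1 0 h0
    have := abs_le.mp this
    simpa using this.2
  · simp

lemma trunc_bounded (d : ℕ) (f : (Fin d → ℝ) → ℝ)
    (hf1 : ∀ x ∈ Set.Icc (0 : Fin d → ℝ) 1, |f x| ≤ 1) :
    Bornology.IsBounded (truncEpigraph d f 1) := by
  apply (Metric.isBounded_closedBall (x := (0 : EuclideanSpace ℝ (Fin (d+1))))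
    (r := Real.sqrt (d+1))).subset
  intro z hz
  obtain ⟨hzc, hzf, hz1⟩ := hz
  have hcoord : ∀ j : Fin (d+1), z j ^ 2 ≤ 1 := by
    intro j
    induction j using Fin.lastCases with
    | last =>
      have hmem : (fun i : Fin d => z i.castSucc) ∈ Set.Icc (0 : Fin d → ℝ) 1 :=
        ⟨fun i => (hzc i).1, fun i => (hzc i).2⟩
      have := abs_le.mp (hf1 _ hmem)
      nlinarith [this.1, this.2]
    | cast i =>
      have := hzc i
      nlinarith [this.1, this.2]
  rw [Metric.mem_closedBall, dist_zero_right, EuclideanSpace.norm_eq]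
  have hsum : (∑ j, ‖z j‖ ^ 2) ≤ (d+1 : ℝ) := by
    calc (∑ j, ‖z j‖ ^ 2) ≤ ∑ _j : Fin (d+1), (1:ℝ) := by
          apply Finset.sum_le_sum
          intro j _
          simpa [sq_abs] using hcoord j
      _ = (d+1 : ℝ) := by simp
  exact Real.sqrt_le_sqrt hsum

/-- One-sided bound: `g x - f x ≤ ρ (1 + |m_g(x)|)` where `ρ` is the Hausdorff
distance between the truncated epigraphs. -/
lemma one_sided (d : ℕ) (f g : (Fin d → ℝ) → ℝ)
    (x : Fin d → ℝ) (hx : ∀ i, x i ∈ Set.Ioo (0:ℝ) 1)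
    (hfx : f x ≤ 1)
    (m : Fin d → ℝ)
    (hm : ∀ z ∈ Set.Icc (0 : Fin d → ℝ) 1, g x + ∑ i, m i * (z i - x i) ≤ g z)
    (hne : (truncEpigraph d g 1).Nonempty)
    (htop : EMetric.hausdorffEdist (truncEpigraph d f 1) (truncEpigraph d g 1) ≠ ⊤) :
    g x - f x ≤ Metric.hausdorffDist (truncEpigraph d f 1) (truncEpigraph d g 1)
      * (1 + Real.sqrt (∑ i, (m i)^2)) := by
  set ρ := Metric.hausdorffDist (truncEpigraph d f 1) (truncEpigraph d g 1) with hρdef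
  set M := Real.sqrt (∑ i, (m i)^2) with hMdef
  have hM : 0 ≤ M := Real.sqrt_nonneg _
  set p : EuclideanSpace ℝ (Fin (d+1)) :=
    WithLp.toLp 2 (fun j => Fin.lastCases (f x) x j : (Fin (d+1)) → ℝ) with hpdef
  have hpcast : ∀ i : Fin d, p i.castSucc = x i := by
    intro i; simp [hpdef, Fin.lastCases_castSucc]
  have hplast : p (Fin.last d) = f x := by simp [hpdef]
  have hp : p ∈ truncEpigraph d f 1 := by
    refine ⟨?_, ?_, ?_⟩
    · intro i
      rw [hpcast i]
      exact ⟨(hx i).1.le, (hx i).2.le⟩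
    · have : (fun i : Fin d => p i.castSucc) = x := funext hpcast
      rw [this, hplast]
    · rw [hplast]; exact hfx
  have h1 : Metric.infDist p (truncEpigraph d g 1) ≤ ρ :=
    Metric.infDist_le_hausdorffDist_of_mem hp htop
  have key : ∀ ε > 0, g x - f x ≤ (ρ + ε) * (1 + M) := by
    intro ε hε
    have hlt : Metric.infDist p (truncEpigraph d g 1) < ρ + ε := by linarith
    obtain ⟨q, hq, hdq⟩ := (Metric.infDist_lt_iff hne).mp hlt
    obtain ⟨hqc, hqg, hq1⟩ := hq
    set z : Fin d → ℝ := fun i => q i.castSucc with hzdef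
    have hz : z ∈ Set.Icc (0 : Fin d → ℝ) 1 :=
      ⟨fun i => (hqc i).1, fun i => (hqc i).2⟩
    have h2 : g x + ∑ i, m i * (z i - x i) ≤ g z := hm z hz
    -- (a) last coordinate bound
    have hdist_eq : dist p q = Real.sqrt (∑ j, dist (p j) (q j) ^ 2) :=
      EuclideanSpace.dist_eq p q
    have ha : |f x - q (Fin.last d)| ≤ dist p q := by
      have hle : dist (p (Fin.last d)) (q (Fin.last d)) ^ 2 ≤ ∑ j, dist (p j) (q j) ^ 2 :=
        Finset.single_le_sum (f := fun j => dist (p j) (q j) ^ 2)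
          (fun j _ => by positivity) (Finset.mem_univ _)
      have : dist (p (Fin.last d)) (q (Fin.last d)) ≤ dist p q := by
        rw [hdist_eq, ← Real.sqrt_sq dist_nonneg]
        exact Real.sqrt_le_sqrt hle
      rw [hplast] at this
      simpa [Real.dist_eq] using this
    -- (b) Cauchy–Schwarz bound
    have hb : |∑ i, m i * (z i - x i)| ≤ M * dist p q := by
      have hcs := cs_abs m (fun i => z i - x i)
      have hsub : Real.sqrt (∑ i, (z i - x i) ^ 2) ≤ dist p q := by
        rw [hdist_eq]
        apply Real.sqrt_le_sqrt
        rw [Fin.sum_univ_castSucc (fun j => dist (p j) (q j) ^ 2)]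
        have hterm : (∑ i : Fin d, (z i - x i) ^ 2)
            = ∑ i : Fin d, dist (p i.castSucc) (q i.castSucc) ^ 2 := by
          apply Finset.sum_congr rfl
          intro i _
          rw [Real.dist_eq, sq_abs, hpcast i]
          simp only [hzdef]
          ring
        rw [hterm]
        exact le_add_of_nonneg_right (by positivity)
      calc |∑ i, m i * (z i - x i)| ≤ M * Real.sqrt (∑ i, (z i - x i) ^ 2) := hcs
        _ ≤ M * dist p q := by
            exact mul_le_mul_of_nonneg_left hsub hM
    have habs1 := abs_le.mp ha
    have habs2 := abs_le.mp hb
    have hMd : M * dist p q ≤ M * (ρ + ε) :=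
      mul_le_mul_of_nonneg_left hdq.le hM
    -- g x - f x ≤ (q last - f x) - ∑ ≤ dist + M * dist ≤ (ρ+ε)(1+M)
    nlinarith [habs1.1, habs1.2, habs2.1, habs2.2, hqg, h2, hdq, hM]
  -- pass to the limit ε → 0
  have h1M : (0:ℝ) < 1 + M := by linarith
  by_contra hcon
  push_neg at hcon
  set δ := (g x - f x - ρ * (1 + M)) with hδdef
  have hδ : 0 < δ := by linarith
  have := key (δ / (2 * (1 + M))) (by positivity)
  have hexp : (ρ + δ / (2 * (1 + M))) * (1 + M) = ρ * (1 + M) + δ / 2 := by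
    field_simp
  rw [hexp] at this
  linarith

theorem pointwise_bound_via_subgradients (d : ℕ) (hd : 1 ≤ d)
    (f g : (Fin d → ℝ) → ℝ)
    (hf : ConvexOn ℝ (Set.Icc (0 : Fin d → ℝ) 1) f)
    (hg : ConvexOn ℝ (Set.Icc (0 : Fin d → ℝ) 1) g)
    (hf1 : ∀ x ∈ Set.Icc (0 : Fin d → ℝ) 1, |f x| ≤ 1)
    (hg1 : ∀ x ∈ Set.Icc (0 : Fin d → ℝ) 1, |g x| ≤ 1)
    (mf mg : (Fin d → ℝ) → Fin d → ℝ)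
    (hmf : ∀ x : Fin d → ℝ, (∀ i, x i ∈ Set.Ioo (0:ℝ) 1) →
      ∀ z ∈ Set.Icc (0 : Fin d → ℝ) 1, f x + ∑ i, mf x i * (z i - x i) ≤ f z)
    (hmg : ∀ x : Fin d → ℝ, (∀ i, x i ∈ Set.Ioo (0:ℝ) 1) →
      ∀ z ∈ Set.Icc (0 : Fin d → ℝ) 1, g x + ∑ i, mg x i * (z i - x i) ≤ g z)
    (ρ : ℝ) (hρ : ρ = Metric.hausdorffDist (truncEpigraph d f 1) (truncEpigraph d g 1))
    (hρpos : 0 < ρ) :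
    ∀ x : Fin d → ℝ, (∀ i, x i ∈ Set.Ioo (0:ℝ) 1) →
      |f x - g x| ≤ ρ * (1 + Real.sqrt (∑ i, (mf x i) ^ 2)
        + Real.sqrt (∑ i, (mg x i) ^ 2)) := by
  intro x hx
  have hxmem : x ∈ Set.Icc (0 : Fin d → ℝ) 1 :=
    ⟨fun i => (hx i).1.le, fun i => (hx i).2.le⟩
  have hfx : f x ≤ 1 := (abs_le.mp (hf1 x hxmem)).2
  have hgx : g x ≤ 1 := (abs_le.mp (hg1 x hxmem)).2
  have hnef := trunc_nonempty d f hf1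
  have hneg := trunc_nonempty d g hg1
  have hbf := trunc_bounded d f hf1
  have hbg := trunc_bounded d g hg1
  have htop : EMetric.hausdorffEdist (truncEpigraph d f 1) (truncEpigraph d g 1) ≠ ⊤ :=
    Metric.hausdorffEdist_ne_top_of_nonempty_of_bounded hnef hneg hbf hbg
  have htop' : EMetric.hausdorffEdist (truncEpigraph d g 1) (truncEpigraph d f 1) ≠ ⊤ := by
    unfold EMetric.hausdorffEdist at htop ⊢
    rwa [Metric.hausdorffEDist_comm]
  have h1 : g x - f x ≤ ρ * (1 + Real.sqrt (∑ i, (mg x i)^2)) := by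
    rw [hρ]
    exact one_sided d f g x hx hfx (mg x) (hmg x hx) hneg htop
  have h2 : f x - g x ≤ ρ * (1 + Real.sqrt (∑ i, (mf x i)^2)) := by
    rw [hρ, Metric.hausdorffDist_comm]
    exact one_sided d g f x hx hgx (mf x) (hmf x hx) hnef htop'
  have hMf : 0 ≤ Real.sqrt (∑ i, (mf x i)^2) := Real.sqrt_nonneg _
  have hMg : 0 ≤ Real.sqrt (∑ i, (mg x i)^2) := Real.sqrt_nonneg _
  rw [abs_le]
  constructor
  · nlinarith
  · nlinarith
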